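/- Let A be a finite-dimensional left Leibniz algebra and U a right ideal of A contained in the Frattini subalgebra Φ(A). Then U is nilpotent. -/

import Mathlib

/-- Lower central series of the subalgebra `U`: `U¹ = U`, `U^{k+1} = U·Uᵏ`. -/
def lcsIn {F A : Type*} [Field F] [AddCommGroup A] [Module F A]
    (mul : A →ₗ[F] A →ₗ[F] A) (U : Submodule F A) : ℕ → Submodule F A
  | 0 => U
  | k + 1 => Submodule.span F {x : A | ∃ a ∈ U, ∃ b ∈ lcsIn mul U k, x = mul a b}

/-- `U` is a maximal subalgebra. -/
def IsMaxSubalg {F A : Type*} [Field F] [AddCommGroup A] [Module F A]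
    (mul : A →ₗ[F] A →ₗ[F] A) (U : Submodule F A) : Prop :=
  (∀ u ∈ U, ∀ v ∈ U, mul u v ∈ U) ∧ U ≠ ⊤ ∧
    ∀ V : Submodule F A, (∀ u ∈ V, ∀ v ∈ V, mul u v ∈ V) → U < V → V = ⊤

/-- Every proper subalgebra is contained in a maximal subalgebra. -/
lemma exists_maxSubalg {F A : Type*} [Field F] [AddCommGroup A]
    [Module F A] [FiniteDimensional F A]
    (mul : A →ₗ[F] A →ₗ[F] A) (V : Submodule F A)
    (hV : ∀ u ∈ V, ∀ v ∈ V, mul u v ∈ V) (hVne : V ≠ ⊤) :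
    ∃ M : Submodule F A, IsMaxSubalg mul M ∧ V ≤ M := by
  have hnoeth : IsNoetherian F A := inferInstance
  obtain ⟨M, hMs, hMmax⟩ := set_has_maximal_iff_noetherian.mpr hnoeth
    {W : Submodule F A | (∀ u ∈ W, ∀ v ∈ W, mul u v ∈ W) ∧ W ≠ ⊤ ∧ V ≤ W}
    ⟨V, hV, hVne, le_rfl⟩
  obtain ⟨hM1, hM2, hM3⟩ := hMs
  refine ⟨M, ⟨hM1, hM2, fun W hW hMW => ?_⟩, hM3⟩
  by_contra hWne
  exact hMmax W ⟨hW, hWne, hM3.trans hMW.le⟩ hMW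

/-- Iterated derivation vanishing: if `f` is a derivation and `f^p a = 0`, `f^q b = 0` with
`p + q = n`, then `f^n (a·b) = 0`. -/
lemma deriv_pow_ker {F A : Type*} [Field F] [AddCommGroup A] [Module F A]
    (mul : A →ₗ[F] A →ₗ[F] A) (f : Module.End F A)
    (hderiv : ∀ a b : A, f (mul a b) = mul (f a) b + mul a (f b)) :
    ∀ n p q : ℕ, p + q = n → ∀ a b : A, (f ^ p) a = 0 → (f ^ q) b = 0 →
      (f ^ n) (mul a b) = 0 := by
  intro n
  induction n with
  | zero =>
    intro p q hpq a b ha hb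
    obtain ⟨rfl, rfl⟩ : p = 0 ∧ q = 0 := by omega
    simp only [pow_zero, Module.End.one_apply] at ha hb ⊢
    subst ha; simp
  | succ n ih =>
    intro p q hpq a b ha hb
    match p, q with
    | 0, q =>
      simp only [pow_zero, Module.End.one_apply] at ha
      subst ha; simp
    | p, 0 =>
      simp only [pow_zero, Module.End.one_apply] at hb
      subst hb; simp
    | p + 1, q + 1 =>
      have h1 : (f ^ (n + 1)) (mul a b) = (f ^ n) (f (mul a b)) := by
        rw [pow_succ, Module.End.mul_apply]
      rw [h1, hderiv a b, map_add]
      have ha' : (f ^ p) (f a) = 0 := by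
        rw [← Module.End.mul_apply, ← pow_succ]; exact ha
      have hb' : (f ^ q) (f b) = 0 := by
        rw [← Module.End.mul_apply, ← pow_succ]; exact hb
      rw [ih p (q + 1) (by omega) (f a) b ha' hb,
        ih (p + 1) q (by omega) a (f b) ha hb', add_zero]

/-- Each left multiplication by an element of `U` is a nilpotent endomorphism. -/
lemma mulLeft_nilpotent {F A : Type*} [Field F] [AddCommGroup A]
    [Module F A] [FiniteDimensional F A]
    (mul : A →ₗ[F] A →ₗ[F] A)
    (leibniz : ∀ a b c : A, mul a (mul b c) = mul (mul a b) c + mul b (mul a c))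
    (U : Submodule F A)
    (hRI : ∀ u ∈ U, ∀ x : A, mul u x ∈ U)
    (hfrat : ∀ M : Submodule F A, IsMaxSubalg mul M → U ≤ M)
    {u : A} (hu : u ∈ U) : IsNilpotent (mul u) := by
  set f : Module.End F A := mul u with hf
  have hderiv : ∀ a b : A, f (mul a b) = mul (f a) b + mul a (f b) := by
    intro a b
    have := leibniz u a b
    simpa [hf] using this
  -- choose `n` good for the Fitting decomposition and kernel stabilization
  obtain ⟨n, hn1, hcompl, hker⟩ : ∃ n : ℕ, 1 ≤ n ∧
      IsCompl (LinearMap.ker (f ^ n)) (LinearMap.range (f ^ n)) ∧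
      (⨆ m, LinearMap.ker (f ^ m)) = LinearMap.ker (f ^ n) := by
    have h := (Filter.eventually_ge_atTop 1).and
      ((f.eventually_isCompl_ker_pow_range_pow).and f.eventually_iSup_ker_pow_eq)
    obtain ⟨n, hn⟩ := Filter.eventually_atTop.mp h
    obtain ⟨h1, h2, h3⟩ := hn n le_rfl
    exact ⟨n, h1, h2, h3⟩
  -- the Fitting null component is a subalgebra
  have hker2n : ∀ x : A, (f ^ (2 * n)) x = 0 → (f ^ n) x = 0 := by
    intro x hx
    have : x ∈ (⨆ m, LinearMap.ker (f ^ m)) :=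
      Submodule.mem_iSup_of_mem (2 * n) hx
    rw [hker] at this
    exact this
  have hsubalg : ∀ a ∈ LinearMap.ker (f ^ n), ∀ b ∈ LinearMap.ker (f ^ n),
      mul a b ∈ LinearMap.ker (f ^ n) := by
    intro a ha b hb
    rw [LinearMap.mem_ker] at ha hb ⊢
    exact hker2n _ (deriv_pow_ker mul f hderiv (2 * n) n n (by omega) a b ha hb)
  -- range f^n ⊆ U
  have hrange : LinearMap.range (f ^ n) ≤ U := by
    rintro x ⟨y, rfl⟩
    obtain ⟨m, rfl⟩ : ∃ m, n = m + 1 := ⟨n - 1, by omega⟩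
    rw [pow_succ', Module.End.mul_apply]
    exact hRI u hu _
  -- conclude ker f^n = ⊤
  have hkertop : LinearMap.ker (f ^ n) = ⊤ := by
    by_contra hne
    obtain ⟨M, hMmax, hKM⟩ := exists_maxSubalg mul _ hsubalg hne
    have hUM : U ≤ M := hfrat M hMmax
    have : (⊤ : Submodule F A) ≤ M := by
      rw [← hcompl.sup_eq_top]
      exact sup_le hKM (hrange.trans hUM)
    exact hMmax.2.1 (top_le_iff.mp this)
  refine ⟨n, ?_⟩
  ext x
  simpa using (LinearMap.mem_ker.mp (hkertop ▸ Submodule.mem_top : x ∈ LinearMap.ker (f ^ n)))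

attribute [local instance 100] LieRing.ofAssociativeRing

/-- a right ideal contained in the Frattini subalgebra is nilpotent. -/
theorem nilpotent_of_rightIdeal_le_frattini {F A : Type*} [Field F] [AddCommGroup A]
    [Module F A] [FiniteDimensional F A]
    (mul : A →ₗ[F] A →ₗ[F] A)
    (leibniz : ∀ a b c : A, mul a (mul b c) = mul (mul a b) c + mul b (mul a c))
    (U : Submodule F A)
    (hRI : ∀ u ∈ U, ∀ x : A, mul u x ∈ U)
    (hfrat : ∀ M : Submodule F A, IsMaxSubalg mul M → U ≤ M) :
    ∃ k, lcsIn mul U k = ⊥ := by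
  classical
  -- The span of the left multiplications by elements of `U` is a Lie subalgebra of `End F A`.
  let S : LieSubalgebra F (Module.End F A) :=
    { toSubmodule := U.map mul
      lie_mem' := by
        rintro _ _ ⟨a, ha, rfl⟩ ⟨b, hb, rfl⟩
        refine ⟨mul a b, hRI a ha b, ?_⟩
        ext c
        have := leibniz a b c
        simp only [LieRing.of_associative_ring_bracket, LinearMap.sub_apply,
          Module.End.mul_apply]
        rw [this]
        abel }
  -- Each element of S is a nilpotent endomorphism.
  have hnil : ∀ x : S, IsNilpotent (LieModule.toEnd F S A x) := by
    rintro ⟨x, hx⟩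
    obtain ⟨u, hu, rfl⟩ := hx
    have h := mulLeft_nilpotent mul leibniz U hRI hfrat hu
    obtain ⟨m, hm⟩ := h
    refine ⟨m, ?_⟩
    have heq : LieModule.toEnd F S A ⟨mul u, ⟨u, hu, rfl⟩⟩ = mul u := by
      ext c; rfl
    rw [heq, hm]
  -- Engel's theorem
  have hNoeth : IsNoetherian F S := by
    exact inferInstanceAs (IsNoetherian F ↥(U.map mul : Submodule F (Module.End F A)))
  have hEngel := LieAlgebra.isEngelian_of_isNoetherian (R := F) (L := S) A hnil
  obtain ⟨k, hk⟩ := hEngel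
  refine ⟨k, le_bot_iff.mp ?_⟩
  have hle : ∀ j, lcsIn mul U j ≤ (LieModule.lowerCentralSeries F (↥S) A j : Submodule F A) := by
    intro j
    induction j with
    | zero => simp [lcsIn]
    | succ j ih =>
      show Submodule.span F _ ≤ _
      rw [Submodule.span_le]
      rintro _ ⟨a, ha, b, hb, rfl⟩
      have hxS : mul a ∈ S := ⟨a, ha, rfl⟩
      have hbm : b ∈ LieModule.lowerCentralSeries F (↥S) A j := ih hb
      have : (⁅(⟨mul a, hxS⟩ : S), b⁆ : A) ∈ LieModule.lowerCentralSeries F (↥S) A (j + 1) := by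
        rw [LieModule.lowerCentralSeries_succ]
        exact LieSubmodule.lie_mem_lie (LieSubmodule.mem_top _) hbm
      simpa using this
  calc lcsIn mul U k ≤ (LieModule.lowerCentralSeries F (↥S) A k : Submodule F A) := hle k
    _ = ⊥ := by
      apply SetLike.coe_injective
      rw [LieSubmodule.coe_toSubmodule, LieModule.coe_lowerCentralSeries_eq_int, hk]; simp
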